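/- If f: U → ℝ^n is a map, x_0 ∈ U, and for 0 < r < dist(x_0, ∂U) one defines ℓ_f(x_0,r) = min_{|x−x_0|=r} |f(x)−f(x_0)|, L_f(x_0,r) = max_{|x−x_0|=r} |f(x)−f(x_0)|, and ρ_f(x_0,r) = (vol_n f(B(x_0,r))/Ω_n)^{1/n}, then whenever f is continuous, open, and injective on B(x_0,r), one has ℓ_f(x_0,r) ≤ ρ_f(x_0,r) ≤ L_f(x_0,r). -/

import Mathlib

open MeasureTheory Metric Set

lemma cross_frontier {E : Type*} [TopologicalSpace E] {V s : Set E} (hV : IsOpen V)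
    (hs : IsPreconnected s) (h1 : (s ∩ V).Nonempty) (h2 : (s \ V).Nonempty) :
    (s ∩ frontier V).Nonempty := by
  by_contra h
  push_neg at h
  have hsub : s ⊆ V ∪ (closure V)ᶜ := by
    intro x hx
    by_cases hxV : x ∈ V
    · exact Or.inl hxV
    · refine Or.inr fun hxc => ?_
      have : x ∈ frontier V := by rw [hV.frontier_eq]; exact ⟨hxc, hxV⟩
      exact (Set.eq_empty_iff_forall_notMem.mp h x) ⟨hx, this⟩
  obtain ⟨y, hys, hyV⟩ := h2
  have hy2 : y ∈ (closure V)ᶜ := by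
    intro hyc
    have : y ∈ frontier V := by rw [hV.frontier_eq]; exact ⟨hyc, hyV⟩
    exact (Set.eq_empty_iff_forall_notMem.mp h y) ⟨hys, this⟩
  obtain ⟨z, _, hz1, hz2⟩ := hs V (closure V)ᶜ hV isClosed_closure.isOpen_compl hsub h1 ⟨y, hys, hy2⟩
  exact hz2 (subset_closure hz1)

/-- For a continuous, open, injective map on a ball, the mean radius is squeezed
between `ℓ_f(x₀,r)` and `L_f(x₀,r)`. -/
theorem mean_radius_between (n : ℕ) (hn : 1 ≤ n)
    (f : EuclideanSpace ℝ (Fin n) → EuclideanSpace ℝ (Fin n))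
    (x₀ : EuclideanSpace ℝ (Fin n)) (r : ℝ) (hr : 0 < r)
    (hc : ContinuousOn f (closedBall x₀ r))
    (hinj : Set.InjOn f (closedBall x₀ r))
    (hopen : IsOpen (f '' ball x₀ r)) :
    sInf ((fun x => dist (f x) (f x₀)) '' sphere x₀ r) ≤
        ((volume (f '' ball x₀ r)).toReal /
          (volume (ball (0 : EuclideanSpace ℝ (Fin n)) 1)).toReal) ^ ((1 : ℝ) / n) ∧
      ((volume (f '' ball x₀ r)).toReal /
          (volume (ball (0 : EuclideanSpace ℝ (Fin n)) 1)).toReal) ^ ((1 : ℝ) / n) ≤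
        sSup ((fun x => dist (f x) (f x₀)) '' sphere x₀ r) := by
  haveI : Nonempty (Fin n) := ⟨⟨0, hn⟩⟩
  haveI : Nontrivial (EuclideanSpace ℝ (Fin n)) := inferInstance
  set V : Set (EuclideanSpace ℝ (Fin n)) := f '' ball x₀ r with hVdef
  set S : Set ℝ := (fun x => dist (f x) (f x₀)) '' sphere x₀ r with hSdef
  set ℓ : ℝ := sInf S with hldef
  set L : ℝ := sSup S with hLdef
  -- basic facts about S
  have hsph : (sphere x₀ r).Nonempty := NormedSpace.sphere_nonempty.mpr hr.le
  have hSne : S.Nonempty := hsph.image _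
  have hSnonneg : ∀ y ∈ S, (0:ℝ) ≤ y := by
    rintro y ⟨x, -, rfl⟩; exact dist_nonneg
  have hbddb : BddBelow S := ⟨0, fun y hy => hSnonneg y hy⟩
  have hScompact : IsCompact S :=
    (isCompact_sphere x₀ r).image_of_continuousOn
      ((continuous_id.dist continuous_const).comp_continuousOn
        (hc.mono sphere_subset_closedBall))
  have hbdda : BddAbove S := hScompact.bddAbove
  have hl0 : 0 ≤ ℓ := le_csInf hSne hSnonneg
  have hL0 : 0 ≤ L := hl0.trans (csInf_le_csSup hSne hbddb hbdda)
  have hl_le : ∀ z ∈ f '' sphere x₀ r, ℓ ≤ dist z (f x₀) := by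
    rintro z ⟨x, hx, rfl⟩; exact csInf_le hbddb ⟨x, hx, rfl⟩
  have hle_L : ∀ z ∈ f '' sphere x₀ r, dist z (f x₀) ≤ L := by
    rintro z ⟨x, hx, rfl⟩; exact le_csSup hbdda ⟨x, hx, rfl⟩
  -- compact image of closed ball
  have hK : IsCompact (f '' closedBall x₀ r) :=
    (isCompact_closedBall x₀ r).image_of_continuousOn hc
  have hfx₀ : f x₀ ∈ V := mem_image_of_mem f (mem_ball_self hr)
  -- frontier of V is inside image of sphere
  have hfront : frontier V ⊆ f '' sphere x₀ r := by
    intro z hz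
    have hznV : z ∉ V := by rw [hopen.frontier_eq] at hz; exact hz.2
    have hzK : z ∈ f '' closedBall x₀ r := by
      have h1 : z ∈ closure (f '' closedBall x₀ r) :=
        closure_mono (image_mono ball_subset_closedBall) hz.1
      rwa [hK.isClosed.closure_eq] at h1
    obtain ⟨x, hx, rfl⟩ := hzK
    refine ⟨x, ?_, rfl⟩
    have hxb : x ∉ ball x₀ r := fun h => hznV ⟨x, h, rfl⟩
    rw [mem_sphere]
    rw [mem_closedBall] at hx
    rw [mem_ball] at hxb
    linarith [lt_or_ge (dist x x₀) r |>.resolve_left hxb]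
  -- inclusion 1 : ball (f x₀) ℓ ⊆ V
  have hinc1 : ball (f x₀) ℓ ⊆ V := by
    intro y hy
    rw [mem_ball] at hy
    by_contra hyV
    obtain ⟨z, hzs, hzf⟩ := cross_frontier hopen
      ((convex_segment (f x₀) y).isPreconnected)
      ⟨f x₀, left_mem_segment ℝ _ _, hfx₀⟩ ⟨y, right_mem_segment ℝ _ _, hyV⟩
    have hz1 : ℓ ≤ dist z (f x₀) := hl_le z (hfront hzf)
    have hz2 : z ∈ closedBall (f x₀) (dist y (f x₀)) :=
      (convex_closedBall (f x₀) (dist y (f x₀))).segment_subset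
        (mem_closedBall_self dist_nonneg) (mem_closedBall.mpr le_rfl) hzs
    rw [mem_closedBall] at hz2
    linarith
  -- inclusion 2 : V ⊆ closedBall (f x₀) L
  have hinc2 : V ⊆ closedBall (f x₀) L := by
    intro y hyV
    rw [mem_closedBall]
    by_contra hgt
    push_neg at hgt
    set d : ℝ := dist y (f x₀) with hddef
    have hd0 : 0 < d := lt_of_le_of_lt hL0 hgt
    obtain ⟨M, hM⟩ := hK.isBounded.subset_closedBall (f x₀)
    set c : ℝ := (max M d + 1) / d with hcdef
    have hc1 : 1 < c := by
      rw [hcdef, lt_div_iff₀ hd0]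
      have : d ≤ max M d := le_max_right _ _
      linarith
    set z : EuclideanSpace ℝ (Fin n) := f x₀ + c • (y - f x₀) with hzdef
    have hdz : dist z (f x₀) = c * d := by
      rw [hzdef, dist_eq_norm, add_sub_cancel_left, norm_smul, Real.norm_eq_abs,
        abs_of_pos (by linarith), hddef, dist_eq_norm]
    have hzM : z ∉ f '' closedBall x₀ r := by
      intro hz
      have := mem_closedBall.mp (hM hz)
      rw [hdz, hcdef, div_mul_cancel₀ _ hd0.ne'] at this
      have : M ≤ max M d := le_max_left _ _
      linarith [mem_closedBall.mp (hM hz), le_max_left M d]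
    have hzV : z ∉ V := fun h => hzM (image_mono ball_subset_closedBall h)
    -- every point of segment [y, z] is at distance ≥ d from f x₀
    have hseg : ∀ w ∈ segment ℝ y z, d ≤ dist w (f x₀) := by
      rintro w ⟨a, b, ha, hb, hab, rfl⟩
      have hw : a • y + b • z - f x₀ = (a + b * c) • (y - f x₀) := by
        rw [hzdef]
        have hb' : a = 1 - b := by linarith
        rw [hb']
        module
      rw [dist_eq_norm, hw, norm_smul, Real.norm_eq_abs,
        abs_of_nonneg (by nlinarith), hddef, dist_eq_norm]
      nlinarith [norm_nonneg (y - f x₀), mul_nonneg hb (by linarith : (0:ℝ) ≤ c - 1),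
        mul_nonneg (mul_nonneg hb (by linarith : (0:ℝ) ≤ c - 1)) (norm_nonneg (y - f x₀))]
    obtain ⟨w, hws, hwf⟩ := cross_frontier hopen
      ((convex_segment y z).isPreconnected)
      ⟨y, left_mem_segment ℝ _ _, hyV⟩ ⟨z, right_mem_segment ℝ _ _, hzV⟩
    have h1 := hle_L w (hfront hwf)
    have h2 := hseg w hws
    linarith
  -- measure estimates
  have hVfin : volume V ≠ ⊤ :=
    ((measure_mono hinc2).trans_lt measure_closedBall_lt_top).ne
  set Ω : ℝ := (volume (ball (0 : EuclideanSpace ℝ (Fin n)) 1)).toReal with hΩdef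
  have hΩpos : 0 < Ω :=
    ENNReal.toReal_pos (measure_ball_pos volume 0 one_pos).ne' measure_ball_lt_top.ne
  have hrank : Module.finrank ℝ (EuclideanSpace ℝ (Fin n)) = n := finrank_euclideanSpace_fin
  have hlow : ℓ ^ n * Ω ≤ (volume V).toReal := by
    have h1 : volume (ball (f x₀) ℓ) ≤ volume V := measure_mono hinc1
    have h2 : (volume (ball (f x₀) ℓ)).toReal = ℓ ^ n * Ω := by
      rw [Measure.addHaar_ball volume (f x₀) hl0, hrank, ENNReal.toReal_mul,
        ENNReal.toReal_ofReal (pow_nonneg hl0 n)]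
    rw [← h2]
    exact ENNReal.toReal_mono hVfin h1
  have hhigh : (volume V).toReal ≤ L ^ n * Ω := by
    have h1 : volume V ≤ volume (closedBall (f x₀) L) := measure_mono hinc2
    have h2 : (volume (closedBall (f x₀) L)).toReal = L ^ n * Ω := by
      rw [Measure.addHaar_closedBall volume (f x₀) hL0, hrank, ENNReal.toReal_mul,
        ENNReal.toReal_ofReal (pow_nonneg hL0 n)]
    rw [← h2]
    exact ENNReal.toReal_mono measure_closedBall_lt_top.ne h1
  -- conclude via rpow
  have hn0 : (n:ℝ) ≠ 0 := Nat.cast_ne_zero.mpr (by omega)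
  have hpow : ∀ t : ℝ, 0 ≤ t → ((t ^ n : ℝ)) ^ ((1:ℝ)/n) = t := by
    intro t ht
    rw [← Real.rpow_natCast t n, ← Real.rpow_mul ht, mul_one_div_cancel hn0, Real.rpow_one]
  constructor
  · calc ℓ = (ℓ ^ n) ^ ((1:ℝ)/n) := (hpow ℓ hl0).symm
      _ ≤ ((volume V).toReal / Ω) ^ ((1:ℝ)/n) := by
          apply Real.rpow_le_rpow (pow_nonneg hl0 n) _ (by positivity)
          rw [le_div_iff₀ hΩpos]; exact hlow
  · calc ((volume V).toReal / Ω) ^ ((1:ℝ)/n) ≤ (L ^ n) ^ ((1:ℝ)/n) := by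
          apply Real.rpow_le_rpow (by positivity) _ (by positivity)
          rw [div_le_iff₀ hΩpos]; exact hhigh
      _ = L := hpow L hL0
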